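/- arXiv:1308.3890 — 4 statements merged into one kernel-verified Lean document; each statement's English description precedes it below -/
import Mathlib

section
/- Let $c_n \in (0,1)$ and let $F_{c_n}$ be the Marčenko–Pastur distribution with ratio index $c_n$ and scale $1$, whose density on $[a(c_n), b(c_n)]$ with $a(c_n)=(1-\sqrt{c_n})^2$, $b(c_n)=(1+\sqrt{c_n})^2$ is $p(x) = \frac{1}{2\pi x c_n}\sqrt{(b(c_n)-x)(x-a(c_n))}$. Then $\int \log(x)\, dF_{c_n}(x) = \frac{c_n-1}{c_n}\log(1-c_n) - 1$. -/
open Real MeasureTheory intervalIntegral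

lemma intcos (n : ℤ) (hn : n ≠ 0) : ∫ x in (0:ℝ)..π, Real.cos (n * x) = 0 := by
  have h : ∀ x ∈ Set.uIcc (0:ℝ) π, HasDerivAt (fun y => Real.sin (n * y) / n) (Real.cos (n * x)) x := by
    intro x _
    have := ((Real.hasDerivAt_sin (n * x)).comp x ((hasDerivAt_id x).const_mul (n:ℝ))).div_const (n:ℝ)
    simpa [mul_comm, mul_div_assoc, mul_div_cancel_left₀ _ (Int.cast_ne_zero.mpr hn : (n:ℝ) ≠ 0)] using this
  rw [intervalIntegral.integral_eq_sub_of_hasDerivAt h ((Real.continuous_cos.comp (continuous_const.mul continuous_id)).intervalIntegrable _ _)]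
  simp [Real.sin_int_mul_pi]

lemma intcos' (n : ℤ) : ∫ x in (0:ℝ)..π, Real.cos (n * x) = if n = 0 then π else 0 := by
  rcases eq_or_ne n 0 with rfl | hn
  · simp
  · simp [hn, intcos n hn]

lemma orth (j k : ℕ) : ∫ x in (0:ℝ)..π, Real.cos (j * x) * Real.cos (k * x)
    = if j = k then (if j = 0 then π else π / 2) else 0 := by
  have hpt : ∀ x : ℝ, Real.cos (j * x) * Real.cos (k * x)
      = (Real.cos ((((j:ℤ) - k : ℤ):ℝ) * x) + Real.cos ((((j:ℤ) + k : ℤ):ℝ) * x)) / 2 := by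
    intro x
    have := Real.cos_add ((j:ℝ) * x) ((k:ℝ) * x)
    have h2 := Real.cos_sub ((j:ℝ) * x) ((k:ℝ) * x)
    push_cast
    rw [sub_mul, add_mul]
    nlinarith [this, h2]
  rw [intervalIntegral.integral_congr (fun x _ => hpt x)]
  rw [intervalIntegral.integral_div, intervalIntegral.integral_add (Continuous.intervalIntegrable (by continuity) _ _) (Continuous.intervalIntegrable (by continuity) _ _),
    intcos' _, intcos' _]
  rcases eq_or_ne j k with rfl | hjk
  · rcases eq_or_ne j 0 with rfl | hj
    · norm_num
    · have : (j:ℤ) + j ≠ 0 := by positivity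
      simp [this, hj]
  · have h1 : (j:ℤ) - k ≠ 0 := by
      simpa [sub_eq_zero] using fun h => hjk (by exact_mod_cast h)
    rcases eq_or_ne ((j:ℤ) + k) 0 with h2 | h2
    · have : j = 0 ∧ k = 0 := by omega
      simp [this.1, this.2] at hjk
    · simp [h1, h2, hjk]
open Real MeasureTheory

lemma normSq_one_sub (r θ : ℝ) :
    Complex.normSq (1 - r * Complex.exp (θ * Complex.I)) = 1 - 2*r*Real.cos θ + r^2 := by
  rw [Complex.exp_mul_I]
  simp [Complex.normSq_apply, Complex.sub_re, Complex.sub_im, Complex.mul_re, Complex.mul_im,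
    Complex.cos_ofReal_re, Complex.sin_ofReal_re, Complex.cos_ofReal_im, Complex.sin_ofReal_im]
  nlinarith [Real.sin_sq_add_cos_sq θ]

lemma Dpos {r : ℝ} (hr : 0 < r) (θ : ℝ) :
    (1 - r)^2 ≤ 1 - 2*r*Real.cos θ + r^2 := by
  nlinarith [Real.cos_le_one θ]

lemma Dle {r : ℝ} (hr : 0 < r) (θ : ℝ) :
    1 - 2*r*Real.cos θ + r^2 ≤ (1 + r)^2 := by
  nlinarith [Real.neg_one_le_cos θ]

lemma logD_hasSum {r : ℝ} (hr : 0 ≤ r) (hr1 : r < 1) (θ : ℝ) :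
    HasSum (fun j : ℕ => -2 * r^j * Real.cos (j*θ) / j)
      (Real.log (1 - 2*r*Real.cos θ + r^2)) := by
  set z : ℂ := r * Complex.exp (θ * Complex.I) with hzdef
  have hz : ‖z‖ < 1 := by
    rw [hzdef]
    simpa [norm_mul, map_mul, Complex.norm_exp, Complex.norm_real,
      abs_of_nonneg hr] using hr1
  have h := Complex.hasSum_taylorSeries_neg_log hz
  have h2 := Complex.reCLM.hasSum h
  have hre : ∀ n : ℕ, Complex.reCLM (z^n / n) = r^n * Real.cos (n*θ) / n := by
    intro n
    have hzn : z ^ n / n = ((r^n / n : ℝ) : ℂ) * Complex.exp ((n*θ : ℝ) * Complex.I) := by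
      rw [hzdef, mul_pow, ← Complex.exp_nat_mul]
      push_cast
      ring
    rw [Complex.reCLM_apply, hzn, Complex.re_ofReal_mul, Complex.exp_ofReal_mul_I_re,
      div_mul_eq_mul_div]
  have habs : (Complex.log (1 - z)).re = Real.log (1 - 2*r*Real.cos θ + r^2) / 2 := by
    rw [Complex.log_re, Complex.norm_def, Real.log_sqrt (Complex.normSq_nonneg _),
      normSq_one_sub]
  rw [Complex.reCLM_apply, Complex.neg_re, habs] at h2
  have h3 : HasSum (fun n : ℕ => r^n * Real.cos (n*θ) / n)
      (-(Real.log (1 - 2*r*Real.cos θ + r^2) / 2)) := by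
    rwa [funext hre] at h2
  have h4 := h3.mul_left (-2)
  have hfun : (fun j : ℕ => -2 * r^j * Real.cos (j*θ) / j)
      = fun i : ℕ => -2 * (r^i * Real.cos (i*θ) / i) := by
    funext j; ring
  rw [hfun, show Real.log (1 - 2*r*Real.cos θ + r^2)
      = -2 * -(Real.log (1 - 2*r*Real.cos θ + r^2) / 2) by ring]
  exact h4

lemma sinD_hasSum {r : ℝ} (hr : 0 < r) (hr1 : r < 1) (θ : ℝ) :
    HasSum (fun k : ℕ => r^k * Real.sin ((k+1)*θ))
      (Real.sin θ / (1 - 2*r*Real.cos θ + r^2)) := by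
  set z : ℂ := r * Complex.exp (θ * Complex.I) with hzdef
  have hz : ‖z‖ < 1 := by
    rw [hzdef]
    simpa [norm_mul, map_mul, Complex.norm_exp, Complex.norm_real,
      abs_of_nonneg hr.le] using hr1
  have h := hasSum_geometric_of_norm_lt_one hz
  have h2 := Complex.imCLM.hasSum h
  have him : ∀ n : ℕ, Complex.imCLM (z^n) = r^n * Real.sin (n*θ) := by
    intro n
    have hzn : z ^ n = ((r^n : ℝ) : ℂ) * Complex.exp ((n*θ : ℝ) * Complex.I) := by
      rw [hzdef, mul_pow, ← Complex.exp_nat_mul]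
      push_cast
      ring
    rw [Complex.imCLM_apply, hzn, Complex.im_ofReal_mul, Complex.exp_ofReal_mul_I_im]
  have hne : (1:ℂ) - z ≠ 0 :=
    sub_ne_zero.mpr (fun h0 => by rw [← h0] at hz; simp at hz)
  have hval : Complex.imCLM ((1 - z)⁻¹) = r * Real.sin θ / (1 - 2*r*Real.cos θ + r^2) := by
    rw [Complex.imCLM_apply, Complex.inv_im, normSq_one_sub]
    congr 1
    rw [hzdef, Complex.exp_mul_I]
    simp [Complex.sub_im, Complex.mul_im, Complex.cos_ofReal_im, Complex.sin_ofReal_re,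
      Complex.cos_ofReal_re, Complex.sin_ofReal_im]
  rw [funext him, hval] at h2
  have h3 := (hasSum_nat_add_iff' 1).mpr h2
  simp only [Finset.range_one, Finset.sum_singleton] at h3
  norm_num at h3
  have h4 := h3.mul_left r⁻¹
  have hfun : (fun k : ℕ => r⁻¹ * (r^(k+1) * Real.sin ((k+1)*θ)))
      = fun k : ℕ => r^k * Real.sin ((k+1)*θ) := by
    funext k
    rw [pow_succ]
    field_simp
  rw [hfun] at h4
  have : r⁻¹ * (r * Real.sin θ / (1 - 2*r*Real.cos θ + r^2))
      = Real.sin θ / (1 - 2*r*Real.cos θ + r^2) := by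
    field_simp
  rwa [this] at h4

lemma Ck {r : ℝ} (hr : 0 < r) (hr1 : r < 1) (k : ℕ) :
    ∫ x in (0:ℝ)..π, Real.log (1 - 2*r*Real.cos x + r^2) * Real.cos (k*x)
      = if k = 0 then 0 else -(π * r^k / k) := by
  set f : ℕ → ℝ → ℝ := fun j x => (-2 * r^j * Real.cos (j*x) / j) * Real.cos (k*x) with hf
  have hpt : ∀ x : ℝ, Real.log (1 - 2*r*Real.cos x + r^2) * Real.cos (k*x) = ∑' j, f j x :=
    fun x => ((logD_hasSum hr.le hr1 x).mul_right (Real.cos (k*x))).tsum_eq.symm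
  have hcont : ∀ j, Continuous (f j) := by
    intro j
    exact ((((continuous_const.mul (Real.continuous_cos.comp (continuous_const.mul
      continuous_id))).div_const _)).mul (Real.continuous_cos.comp (continuous_const.mul
      continuous_id)))
  have h_int : ∀ j, Integrable (f j) (volume.restrict (Set.Ioc (0:ℝ) π)) := fun j =>
    (hcont j).integrableOn_Ioc
  have hbound : ∀ j, ∀ x : ℝ, ‖f j x‖ ≤ 2 * r^j := by
    intro j x
    rcases Nat.eq_zero_or_pos j with rfl | hj
    · simp [hf]
    · rw [hf]
      have h1 : |Real.cos (j*x)| ≤ 1 := Real.abs_cos_le_one _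
      have h2 : |Real.cos (k*x)| ≤ 1 := Real.abs_cos_le_one _
      have hj1 : (1:ℝ) ≤ j := by exact_mod_cast hj
      rw [Real.norm_eq_abs, abs_mul, abs_div, abs_mul, abs_mul]
      have hrj : (0:ℝ) ≤ r ^ j := by positivity
      calc |(-2)| * |r^j| * |Real.cos (j*x)| / |(j:ℝ)| * |Real.cos (k*x)|
          ≤ 2 * r^j * 1 / 1 * 1 := by
            apply mul_le_mul _ h2 (abs_nonneg _) (by positivity)
            apply div_le_div₀ (by positivity) _ one_pos _
            · rw [abs_neg, abs_two, abs_of_nonneg hrj]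
              exact mul_le_mul_of_nonneg_left h1 (by positivity)
            · rwa [abs_of_nonneg (by positivity : (0:ℝ) ≤ (j:ℝ))]
        _ = 2 * r^j := by ring
  have h_sum : Summable (fun j => ∫ x in Set.Ioc (0:ℝ) π, ‖f j x‖) := by
    apply Summable.of_nonneg_of_le
      (fun j => integral_nonneg (fun x => norm_nonneg _))
      (fun j => ?_)
      (((summable_geometric_of_lt_one hr.le hr1).mul_left 2).mul_right π)
    calc ∫ x in Set.Ioc (0:ℝ) π, ‖f j x‖
        ≤ ∫ _ in Set.Ioc (0:ℝ) π, 2 * r^j := by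
          apply integral_mono ((h_int j).norm) (integrable_const _)
          exact fun x => hbound j x
      _ = 2 * r^j * π := by
          rw [setIntegral_const]
          simp [Real.volume_Ioc, ENNReal.toReal_ofReal Real.pi_pos.le]
          rw [max_eq_left Real.pi_pos.le]
          ring
  rw [intervalIntegral.integral_of_le Real.pi_pos.le,
    integral_congr_ae (Filter.Eventually.of_forall (fun x => hpt x)),
    ← MeasureTheory.integral_tsum_of_summable_integral_norm h_int h_sum]
  have hfj : ∀ j, ∫ x in Set.Ioc (0:ℝ) π, f j x
      = (-2 * r^j / j) * (if j = k then (if j = 0 then π else π/2) else 0) := by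
    intro j
    have : ∀ x : ℝ, f j x = (-2 * r^j / j) * (Real.cos (j*x) * Real.cos (k*x)) := by
      intro x; rw [hf]; ring
    rw [integral_congr_ae (Filter.Eventually.of_forall this),
      MeasureTheory.integral_const_mul, ← intervalIntegral.integral_of_le Real.pi_pos.le,
      orth j k]
  rw [tsum_congr hfj]
  rcases eq_or_ne k 0 with rfl | hk
  · have : ∀ j : ℕ, (-2 * r^j / (j:ℝ)) * (if j = 0 then (if j = 0 then π else π/2) else 0) = 0 := by
      intro j
      rcases eq_or_ne j 0 with rfl | hj
      · simp
      · simp [hj]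
    rw [tsum_congr this, tsum_zero]
    simp
  · rw [tsum_eq_single k ?h]
    · simp [hk]
      field_simp
    · intro j hjk
      simp [hjk]

lemma sum_u {c : ℝ} (hc0 : 0 < c) (hc1 : c < 1) :
    HasSum (fun k : ℕ => c^(k+1)/(k+2) - c^k/k) ((c-1)/c * Real.log (1-c) - 1) := by
  have habs : |c| < 1 := by rw [abs_of_pos hc0]; exact hc1
  have h0 := Real.hasSum_pow_div_log_of_abs_lt_one habs
  -- h0 : HasSum (fun n => c^(n+1)/(n+1)) (-log (1-c))
  have h1 : HasSum (fun k : ℕ => c^k/k) (-Real.log (1-c)) := by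
    refine (hasSum_nat_add_iff' 1).mp ?_
    simp only [Finset.range_one, Finset.sum_singleton]
    norm_num
    convert h0 using 2 with n
  have h2 : HasSum (fun n : ℕ => c * (c^(n+1)/(n+2))) (-Real.log (1-c) - c) := by
    have := (hasSum_nat_add_iff' 1).mpr h0
    simp only [Finset.range_one, Finset.sum_singleton] at this
    norm_num at this
    convert this using 2 with n
    push_cast
    · rfl
    · ring
  have h3 := h2.mul_left c⁻¹
  have hfun : (fun n : ℕ => c⁻¹ * (c * (c^(n+1)/(n+2)))) = fun n : ℕ => c^(n+1)/(n+2) := by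
    funext n; field_simp
  rw [hfun] at h3
  have h4 := h3.sub h1
  convert h4 using 1
  · rfl
  field_simp
  ring

lemma key {r : ℝ} (hr : 0 < r) (hr1 : r < 1) :
    ∫ θ in (0:ℝ)..π, (2/π) * (Real.log (1 - 2*r*Real.cos θ + r^2)
        * (Real.sin θ * (Real.sin θ / (1 - 2*r*Real.cos θ + r^2))))
      = (r^2 - 1) / r^2 * Real.log (1 - r^2) - 1 := by
  have hD0 : ∀ θ : ℝ, (0:ℝ) < 1 - 2*r*Real.cos θ + r^2 := by
    intro θ
    have := Dpos hr θ
    nlinarith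
  have hDcont : Continuous (fun θ : ℝ => 1 - 2*r*Real.cos θ + r^2) := by continuity
  have hLcont : Continuous (fun θ => Real.log (1 - 2*r*Real.cos θ + r^2)) :=
    Continuous.log hDcont (fun θ => (hD0 θ).ne')
  set M : ℝ := 2 * |Real.log (1-r)| with hM
  have hr' : (0:ℝ) < 1 - r := by linarith
  have hlogbnd : ∀ θ : ℝ, |Real.log (1 - 2*r*Real.cos θ + r^2)| ≤ M := by
    intro θ
    rw [abs_le]
    have hnla : -Real.log (1-r) ≤ |Real.log (1-r)| := neg_le_abs _
    have hla : Real.log (1-r) ≤ |Real.log (1-r)| := le_abs_self _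
    constructor
    · have hle : (1-r)^2 ≤ 1 - 2*r*Real.cos θ + r^2 := Dpos hr θ
      have := Real.log_le_log (by positivity) hle
      rw [Real.log_pow] at this
      push_cast at this
      rw [hM]; nlinarith
    · have hle : (1 - 2*r*Real.cos θ + r^2) ≤ (1+r)^2 := Dle hr θ
      have h5 := Real.log_le_log (hD0 θ) hle
      rw [Real.log_pow] at h5
      have h6 : Real.log (1+r) ≤ Real.log (1-r)⁻¹ := by
        apply Real.log_le_log (by linarith)
        rw [inv_eq_one_div, le_div_iff₀ hr']
        nlinarith
      rw [Real.log_inv] at h6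
      push_cast at h5
      rw [hM]
      nlinarith
  set g : ℕ → ℝ → ℝ := fun k θ =>
    (2/π) * (Real.log (1 - 2*r*Real.cos θ + r^2) * Real.sin θ) * (r^k * Real.sin ((k+1)*θ))
    with hg
  have hpt : ∀ θ : ℝ, (2/π) * (Real.log (1 - 2*r*Real.cos θ + r^2)
      * (Real.sin θ * (Real.sin θ / (1 - 2*r*Real.cos θ + r^2)))) = ∑' k, g k θ := by
    intro θ
    have h := (sinD_hasSum hr hr1 θ).mul_left
      ((2/π) * (Real.log (1 - 2*r*Real.cos θ + r^2) * Real.sin θ))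
    rw [hg, h.tsum_eq]
    ring
  have hcontg : ∀ k, Continuous (g k) := by
    intro k
    rw [hg]
    exact (continuous_const.mul (hLcont.mul Real.continuous_sin)).mul
      (continuous_const.mul (Real.continuous_sin.comp (by continuity)))
  have h_int : ∀ k, Integrable (g k) (volume.restrict (Set.Ioc (0:ℝ) π)) := fun k =>
    (hcontg k).integrableOn_Ioc
  have hbnd : ∀ k, ∀ θ : ℝ, ‖g k θ‖ ≤ (2/π) * M * r^k := by
    intro k θ
    rw [hg, Real.norm_eq_abs]
    simp only []
    rw [abs_mul, abs_mul, abs_mul, abs_mul]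
    have h1 : |Real.sin θ| ≤ 1 := Real.abs_sin_le_one _
    have h2 : |Real.sin ((k+1)*θ)| ≤ 1 := Real.abs_sin_le_one _
    have h3 := hlogbnd θ
    have h4 : |(2:ℝ)/π| = 2/π := abs_of_pos (by positivity)
    have h5 : |r^k| = r^k := abs_of_pos (by positivity)
    have hMpos : 0 ≤ M := by rw [hM]; positivity
    rw [h4, h5]
    have : |Real.log (1 - 2*r*Real.cos θ + r^2)| * |Real.sin θ| ≤ M * 1 :=
      mul_le_mul h3 h1 (abs_nonneg _) hMpos
    have hrk : (0:ℝ) ≤ r^k := by positivity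
    calc 2/π * (|Real.log (1 - 2*r*Real.cos θ + r^2)| * |Real.sin θ|)
          * (r^k * |Real.sin ((k+1)*θ)|)
        ≤ 2/π * (M * 1) * (r^k * 1) := by
          apply mul_le_mul
          · exact mul_le_mul_of_nonneg_left this (by positivity)
          · exact mul_le_mul_of_nonneg_left h2 hrk
          · positivity
          · positivity
      _ = (2/π) * M * r^k := by ring
  have h_sum : Summable (fun k => ∫ θ in Set.Ioc (0:ℝ) π, ‖g k θ‖) := by
    apply Summable.of_nonneg_of_le
      (fun k => integral_nonneg (fun x => norm_nonneg _))
      (fun k => ?_)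
      ((((summable_geometric_of_lt_one hr.le hr1).mul_left ((2/π) * M)).mul_right π))
    calc ∫ θ in Set.Ioc (0:ℝ) π, ‖g k θ‖
        ≤ ∫ _ in Set.Ioc (0:ℝ) π, (2/π) * M * r^k := by
          apply integral_mono ((h_int k).norm) (integrable_const _)
          exact fun x => hbnd k x
      _ = (2/π) * M * r^k * π := by
          rw [setIntegral_const]
          simp [Real.volume_Ioc, ENNReal.toReal_ofReal Real.pi_pos.le]
          rw [max_eq_left Real.pi_pos.le]
          ring
  rw [intervalIntegral.integral_of_le Real.pi_pos.le,
    integral_congr_ae (Filter.Eventually.of_forall (fun x => hpt x)),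
    ← MeasureTheory.integral_tsum_of_summable_integral_norm h_int h_sum]
  have hgval : ∀ k : ℕ, ∫ θ in Set.Ioc (0:ℝ) π, g k θ
      = (r^2)^(k+1)/(k+2) - (r^2)^k/k := by
    intro k
    have hsplit : ∀ θ : ℝ, g k θ
        = ((r^k/π) * (Real.log (1 - 2*r*Real.cos θ + r^2) * Real.cos (k*θ)))
          - ((r^k/π) * (Real.log (1 - 2*r*Real.cos θ + r^2) * Real.cos ((k+2)*θ))) := by
      intro θ
      rw [hg]
      have htrig : Real.cos ((k:ℝ)*θ) - Real.cos ((k+2:ℝ)*θ)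
          = 2 * Real.sin (((k:ℝ)+1)*θ) * Real.sin θ := by
        have hc1 := Real.cos_sub (((k:ℝ)+1)*θ) θ
        have hc2 := Real.cos_add (((k:ℝ)+1)*θ) θ
        have e1 : ((k:ℝ)+1)*θ - θ = (k:ℝ)*θ := by ring
        have e2 : ((k:ℝ)+1)*θ + θ = ((k:ℝ)+2)*θ := by ring
        rw [e1] at hc1
        rw [e2] at hc2
        push_cast
        nlinarith [hc1, hc2]
      push_cast
      linear_combination (-(r^k/π) * Real.log (1 - 2*r*Real.cos θ + r^2)) * htrig
    rw [integral_congr_ae (Filter.Eventually.of_forall hsplit)]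
    have hint1 : Integrable (fun θ : ℝ =>
        (r^k/π) * (Real.log (1 - 2*r*Real.cos θ + r^2) * Real.cos (k*θ)))
        (volume.restrict (Set.Ioc (0:ℝ) π)) :=
      (Continuous.integrableOn_Ioc (by exact continuous_const.mul (hLcont.mul
        (Real.continuous_cos.comp (by continuity)))))
    have hint2 : Integrable (fun θ : ℝ =>
        (r^k/π) * (Real.log (1 - 2*r*Real.cos θ + r^2) * Real.cos (((k:ℝ)+2)*θ)))
        (volume.restrict (Set.Ioc (0:ℝ) π)) :=
      (Continuous.integrableOn_Ioc (by exact continuous_const.mul (hLcont.mul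
        (Real.continuous_cos.comp (by continuity)))))
    rw [integral_sub hint1 hint2, MeasureTheory.integral_const_mul,
      MeasureTheory.integral_const_mul,
      ← intervalIntegral.integral_of_le Real.pi_pos.le,
      ← intervalIntegral.integral_of_le Real.pi_pos.le]
    have e2 : ∫ x in (0:ℝ)..π, Real.log (1 - 2*r*Real.cos x + r^2) * Real.cos (((k:ℝ)+2)*x)
        = -(π * r^(k+2) / (k+2)) := by
      have := Ck hr hr1 (k+2)
      simp only [Nat.cast_add, Nat.cast_ofNat] at this
      rw [if_neg (by omega)] at this
      convert this using 3 <;> push_cast <;> ring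
    rw [e2, Ck hr hr1 k]
    rcases eq_or_ne k 0 with rfl | hk
    · norm_num
      field_simp
    · rw [if_neg hk]
      have hkpos : (0:ℝ) < k := by exact_mod_cast Nat.pos_of_ne_zero hk
      field_simp
      ring
  rw [tsum_congr hgval]
  have hc0 : (0:ℝ) < r^2 := by positivity
  have hc1 : r^2 < 1 := by nlinarith
  rw [(sum_u hc0 hc1).tsum_eq]

theorem mp_log_integral (c : ℝ) (hc : c ∈ Set.Ioo (0:ℝ) 1) :
    let a := (1 - Real.sqrt c)^2
    let b := (1 + Real.sqrt c)^2
    ∫ x in a..b,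
        Real.log x * (1 / (2 * Real.pi * x * c) * Real.sqrt ((b - x) * (x - a)))
      = (c - 1) / c * Real.log (1 - c) - 1 := by
  obtain ⟨hc0, hc1⟩ := hc
  intro a b
  set r := Real.sqrt c with hrdef
  have hr0 : 0 < r := Real.sqrt_pos.mpr hc0
  have hrsq : r^2 = c := Real.sq_sqrt hc0.le
  have hr1 : r < 1 := by nlinarith [Real.sqrt_nonneg c]
  have hD0 : ∀ θ : ℝ, (0:ℝ) < 1 - 2*r*Real.cos θ + r^2 := by
    intro θ
    have h1 : (0:ℝ) < (1-r)^2 := by nlinarith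
    exact lt_of_lt_of_le h1 (Dpos hr0 θ)
  show (∫ x in ((1-r)^2)..((1+r)^2),
      Real.log x * (1 / (2 * π * x * c) * Real.sqrt (((1+r)^2 - x) * (x - (1-r)^2))))
    = (c - 1) / c * Real.log (1 - c) - 1
  set gfun : ℝ → ℝ := fun x =>
    Real.log x * (1 / (2 * π * x * c) * Real.sqrt (((1+r)^2 - x) * (x - (1-r)^2))) with hgf
  set f : ℝ → ℝ := fun θ => 1 - 2*r*Real.cos θ + r^2 with hfdef
  have hderiv : ∀ x ∈ Set.uIcc (0:ℝ) π, HasDerivAt f (2*r*Real.sin x) x := by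
    intro x _
    have h1 : HasDerivAt (fun θ : ℝ => 2*r*Real.cos θ) (2*r*(-Real.sin x)) x :=
      (Real.hasDerivAt_cos x).const_mul (2*r)
    have h2 : HasDerivAt (fun θ : ℝ => 1 - 2*r*Real.cos θ + r^2)
        (0 - 2*r*(-Real.sin x) + 0) x :=
      ((hasDerivAt_const x (1:ℝ)).sub h1).add (hasDerivAt_const x (r^2))
    convert h2 using 1
    ring
  have hf'cont : ContinuousOn (fun x : ℝ => 2*r*Real.sin x) (Set.uIcc (0:ℝ) π) :=
    (continuous_const.mul Real.continuous_sin).continuousOn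
  have hgcont : ContinuousOn gfun (f '' Set.uIcc (0:ℝ) π) := by
    apply ContinuousOn.mono (s := {x : ℝ | 0 < x})
    · intro x hx
      apply ContinuousAt.continuousWithinAt
      have hx0 : x ≠ 0 := ne_of_gt hx
      apply ContinuousAt.mul (Real.continuousAt_log hx0)
      apply ContinuousAt.mul
      · refine ContinuousAt.div continuousAt_const (by fun_prop) ?_
        have hx' : (0:ℝ) < x := hx
        positivity
      · exact (Real.continuous_sqrt.comp (by continuity)).continuousAt
    · rintro x ⟨θ, -, rfl⟩
      exact hD0 θ
  have hsub := intervalIntegral.integral_comp_smul_deriv' hderiv hf'cont hgcont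
  have hf0 : f 0 = (1-r)^2 := by rw [hfdef]; simp [Real.cos_zero]; ring
  have hfπ : f π = (1+r)^2 := by rw [hfdef]; simp [Real.cos_pi]; ring
  rw [hf0, hfπ] at hsub
  rw [← hsub]
  have hcongr : ∀ θ ∈ Set.uIcc (0:ℝ) π,
      (2*r*Real.sin θ) • ((gfun ∘ f) θ)
      = (2/π) * (Real.log (1 - 2*r*Real.cos θ + r^2)
          * (Real.sin θ * (Real.sin θ / (1 - 2*r*Real.cos θ + r^2)))) := by
    intro θ hθ
    rw [Set.uIcc_of_le Real.pi_pos.le] at hθ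
    have hsin : 0 ≤ Real.sin θ := Real.sin_nonneg_of_nonneg_of_le_pi hθ.1 hθ.2
    have hs : ((1+r)^2 - f θ) * (f θ - (1-r)^2) = (2*r*Real.sin θ)^2 := by
      rw [hfdef]
      simp only []
      nlinarith [Real.sin_sq_add_cos_sq θ]
    have hsqrt : Real.sqrt (((1+r)^2 - f θ) * (f θ - (1-r)^2)) = 2*r*Real.sin θ := by
      rw [hs, Real.sqrt_sq (by positivity)]
    show (2*r*Real.sin θ) * (gfun (f θ)) = _
    rw [hgf]
    simp only []
    rw [hsqrt]
    have hDpos := hD0 θ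
    have hfθ : f θ = 1 - 2*r*Real.cos θ + r^2 := rfl
    rw [hfθ]
    rw [← hrsq]
    have hπ : (0:ℝ) < π := Real.pi_pos
    field_simp
  rw [intervalIntegral.integral_congr hcongr, key hr0 hr1, hrsq]
end

section
/- Let $c \in (0,1)$, $\sigma^2 > 0$, $a(c)=\sigma^2(1-\sqrt{c})^2$, $b(c)=\sigma^2(1+\sqrt{c})^2$. Then for $g(x)=\log x$ and $\sigma^2=1$, the quantity $m(g) = \frac{g(a(c))+g(b(c))}{4} - \frac{1}{2\pi}\int_{a(c)}^{b(c)} \frac{g(x)}{\sqrt{4c - (x-1-c)^2}}\, dx$ equals $\frac{1}{2}\log(1-c)$. -/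
open Real Complex

lemma cauchy_log_abs {r : ℝ} (hr0 : 0 ≤ r) (hr1 : r < 1) :
    ∫ θ in (0:ℝ)..(2*π), Real.log ‖1 + (r:ℂ) * Complex.exp (θ * Complex.I)‖ = 0 := by
  set f : ℂ → ℂ := fun z => Complex.log (1 + (r:ℂ) * z) with hf
  have hslit : ∀ z : ℂ, ‖z‖ ≤ 1 → (1 + (r:ℂ) * z) ∈ Complex.slitPlane := by
    intro z hz
    rw [Complex.mem_slitPlane_iff]
    left
    have h1 : |z.re| ≤ 1 := (Complex.abs_re_le_norm z).trans hz
    have : r * z.re ≥ -(r * 1) := by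
      rw [ge_iff_le, neg_le]
      calc -(r * z.re) = r * (-z.re) := by ring
        _ ≤ r * 1 := by
          apply mul_le_mul_of_nonneg_left _ hr0
          linarith [abs_le.mp h1]
    simp only [Complex.add_re, Complex.one_re, Complex.mul_re, Complex.ofReal_re,
      Complex.ofReal_im, zero_mul, sub_zero]
    nlinarith
  have hd : ∀ z ∈ Metric.closedBall (0:ℂ) 1, DifferentiableAt ℂ f z := by
    intro z hz
    simp only [Metric.mem_closedBall, dist_zero_right] at hz
    exact (((differentiableAt_const _).add
      ((differentiableAt_const _).mul differentiableAt_id)).clog (hslit z hz))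
  have key : (∮ z in C(0, 1), (z - 0)⁻¹ • f z) = (2 * π * Complex.I : ℂ) • f 0 := by
    refine Complex.circleIntegral_sub_inv_smul_of_differentiable_on_off_countable
      Set.countable_empty (by simp) (fun z hz => (hd z hz).continuousAt.continuousWithinAt)
      (fun z hz => hd z (Metric.ball_subset_closedBall hz.1))
  have hf0 : f 0 = 0 := by simp [hf]
  rw [hf0, smul_zero] at key
  have hcont : Continuous fun θ : ℝ => f (Complex.exp (θ * Complex.I)) := by
    apply Continuous.clog
    · exact continuous_const.add (continuous_const.mul
        (Complex.continuous_exp.comp (Complex.continuous_ofReal.mul continuous_const)))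
    · intro θ
      exact hslit _ (by simp [Complex.norm_exp])
  have key2 : ∫ θ in (0:ℝ)..(2*π), f (Complex.exp (θ * Complex.I)) = 0 := by
    have : (∮ z in C(0, 1), (z - 0)⁻¹ • f z)
        = ∫ θ in (0:ℝ)..(2*π), Complex.I * f (Complex.exp (θ * Complex.I)) := by
      simp only [circleIntegral, deriv_circleMap, circleMap_zero, smul_eq_mul]
      congr 1
      ext θ
      have hne : Complex.exp (θ * Complex.I) ≠ 0 := Complex.exp_ne_zero _
      field_simp
      simp only [Complex.ofReal_one, one_mul, sub_zero]
    rw [this] at key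
    rw [intervalIntegral.integral_const_mul] at key
    simpa [Complex.I_ne_zero] using key
  have hInt : IntervalIntegrable (fun θ : ℝ => f (Complex.exp (θ * Complex.I)))
      MeasureTheory.volume 0 (2*π) := hcont.intervalIntegrable _ _
  have hre : ∫ θ in (0:ℝ)..(2*π), (f (Complex.exp (θ * Complex.I))).re = 0 := by
    have h2π : (0:ℝ) ≤ 2*π := by positivity
    rw [intervalIntegral.integral_of_le h2π]
    rw [intervalIntegral.integral_of_le h2π] at key2
    have hi : MeasureTheory.IntegrableOn (fun θ : ℝ => f (Complex.exp (θ * Complex.I)))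
        (Set.Ioc 0 (2*π)) MeasureTheory.volume :=
      hcont.integrableOn_Ioc
    calc ∫ x in Set.Ioc 0 (2*π), (f (Complex.exp (x * Complex.I))).re
        = Complex.re (∫ x in Set.Ioc 0 (2*π), f (Complex.exp (x * Complex.I))) :=
          integral_re hi
      _ = 0 := by rw [key2]; simp
  convert hre using 2 with θ
  simp [hf, Complex.log_re]

lemma integral_log_cos_two_pi {c : ℝ} (hc0 : 0 < c) (hc1 : c < 1) :
    ∫ θ in (0:ℝ)..(2*π), Real.log (1 + c + 2*Real.sqrt c*Real.cos θ) = 0 := by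
  have hr0 : (0:ℝ) ≤ Real.sqrt c := Real.sqrt_nonneg c
  have hr1 : Real.sqrt c < 1 := by
    rw [show (1:ℝ) = Real.sqrt 1 by simp]
    exact Real.sqrt_lt_sqrt hc0.le hc1
  have key := cauchy_log_abs hr0 hr1
  have habs : ∀ θ : ℝ, ‖1 + (Real.sqrt c : ℂ) * Complex.exp (θ * Complex.I)‖^2
      = 1 + c + 2*Real.sqrt c*Real.cos θ := by
    intro θ
    rw [Complex.sq_norm, Complex.normSq_apply]
    simp only [Complex.add_re, Complex.one_re, Complex.mul_re, Complex.ofReal_re,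
      Complex.ofReal_im, Complex.exp_ofReal_mul_I_re, Complex.exp_ofReal_mul_I_im,
      zero_mul, sub_zero, Complex.add_im, Complex.one_im, Complex.mul_im, zero_add,
      mul_zero, add_zero]
    have hsq : Real.sqrt c * Real.sqrt c = c := Real.mul_self_sqrt hc0.le
    nlinarith [Real.sin_sq_add_cos_sq θ]
  have : ∀ θ : ℝ, Real.log (1 + c + 2*Real.sqrt c*Real.cos θ)
      = 2 * Real.log ‖1 + (Real.sqrt c : ℂ) * Complex.exp (θ * Complex.I)‖ := by
    intro θ
    rw [← habs θ, Real.log_pow]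
    norm_num
  simp_rw [this]
  rw [intervalIntegral.integral_const_mul, key, mul_zero]

lemma integral_log_cos_pi {c : ℝ} (hc0 : 0 < c) (hc1 : c < 1) :
    ∫ θ in (0:ℝ)..π, Real.log (1 + c + 2*Real.sqrt c*Real.cos θ) = 0 := by
  set g : ℝ → ℝ := fun θ => Real.log (1 + c + 2*Real.sqrt c*Real.cos θ) with hg
  have hpos : ∀ θ : ℝ, 0 < 1 + c + 2*Real.sqrt c*Real.cos θ := by
    intro θ
    have h1 : Real.sqrt c < 1 := by
      rw [show (1:ℝ) = Real.sqrt 1 by simp]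
      exact Real.sqrt_lt_sqrt hc0.le hc1
    have hsq : Real.sqrt c * Real.sqrt c = c := Real.mul_self_sqrt hc0.le
    nlinarith [Real.neg_one_le_cos θ, Real.sqrt_nonneg c]
  have hcont : Continuous g := by
    apply Continuous.log
    · continuity
    · exact fun θ => (hpos θ).ne'
  have hsym : ∫ θ in π..(2*π), g θ = ∫ θ in (0:ℝ)..π, g θ := by
    have := intervalIntegral.integral_comp_sub_left (a := 0) (b := π) g (2*π)
    rw [show 2*π - π = π by ring, show 2*π - 0 = 2*π by ring] at this
    rw [← this]
    congr 1
    ext θ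
    simp [hg, Real.cos_sub, Real.cos_two_pi, Real.sin_two_pi]
  have hsplit : (∫ θ in (0:ℝ)..π, g θ) + ∫ θ in π..(2*π), g θ
      = ∫ θ in (0:ℝ)..(2*π), g θ :=
    intervalIntegral.integral_add_adjacent_intervals
      (hcont.intervalIntegrable _ _) (hcont.intervalIntegrable _ _)
  have h2 := integral_log_cos_two_pi hc0 hc1
  rw [hsym] at hsplit
  rw [show (∫ θ in (0:ℝ)..(2*π), g θ) = 0 from h2] at hsplit
  linarith

lemma integral_singular_eq_zero {c : ℝ} (hc0 : 0 < c) (hc1 : c < 1) :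
    ∫ x in ((1 - Real.sqrt c)^2)..((1 + Real.sqrt c)^2),
      Real.log x / Real.sqrt (4 * c - (x - 1 - c)^2) = 0 := by
  set s := Real.sqrt c with hs
  have hs0 : 0 < s := Real.sqrt_pos.mpr hc0
  have hs1 : s < 1 := by
    rw [hs, show (1:ℝ) = Real.sqrt 1 by simp]
    exact Real.sqrt_lt_sqrt hc0.le hc1
  have hsq : s * s = c := Real.mul_self_sqrt hc0.le
  have ha : (1 - s)^2 = 1 + c - 2*s := by nlinarith
  have hb : (1 + s)^2 = 1 + c + 2*s := by nlinarith
  have hab : (1 - s)^2 ≤ (1 + s)^2 := by nlinarith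
  set F : ℝ → ℝ := fun x => Real.log x / Real.sqrt (4 * c - (x - 1 - c)^2) with hF
  set φ : ℝ → ℝ := fun θ => 1 + c + 2*s*Real.cos θ with hφ
  have himg : φ '' Set.Ioo 0 π = Set.Ioo ((1-s)^2) ((1+s)^2) := by
    ext x
    constructor
    · rintro ⟨θ, ⟨hθ0, hθπ⟩, rfl⟩
      have h1 : Real.cos θ < 1 := by
        have := Real.strictAntiOn_cos (Set.left_mem_Icc.mpr Real.pi_pos.le)
          ⟨hθ0.le, hθπ.le⟩ hθ0
        simpa using this
      have h2 : -1 < Real.cos θ := by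
        have := Real.strictAntiOn_cos ⟨hθ0.le, hθπ.le⟩
          (Set.right_mem_Icc.mpr Real.pi_pos.le) hθπ
        simpa using this
      constructor
      · rw [ha]; simp only [hφ]; nlinarith
      · rw [hb]; simp only [hφ]; nlinarith
    · rintro ⟨h1, h2⟩
      rw [ha] at h1; rw [hb] at h2
      set y := (x - 1 - c)/(2*s) with hy
      have hy1 : -1 < y := by rw [hy]; rw [lt_div_iff₀ (by positivity)]; linarith
      have hy2 : y < 1 := by rw [hy]; rw [div_lt_iff₀ (by positivity)]; linarith
      refine ⟨Real.arccos y, ⟨Real.arccos_pos.mpr hy2, lt_of_le_of_ne (Real.arccos_le_pi y) (fun h => by linarith [Real.arccos_eq_pi.mp h])⟩, ?_⟩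
      simp only [hφ]
      rw [Real.cos_arccos hy1.le hy2.le, hy]
      field_simp
      ring
  have hderiv : ∀ θ ∈ Set.Ioo (0:ℝ) π,
      HasDerivWithinAt φ (-(2*s*Real.sin θ)) (Set.Ioo 0 π) θ := by
    intro θ _
    have : HasDerivAt φ (-(2*s*Real.sin θ)) θ := by
      have h1 : HasDerivAt (fun θ : ℝ => 1 + c + 2*s*Real.cos θ)
          (0 + 2*s*(-Real.sin θ)) θ :=
        (hasDerivAt_const θ (1+c)).add ((Real.hasDerivAt_cos θ).const_mul (2*s))
      convert h1 using 1
      ring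
    exact this.hasDerivWithinAt
  have hinj : Set.InjOn φ (Set.Ioo 0 π) := by
    intro θ₁ h₁ θ₂ h₂ heq
    have hc' : Real.cos θ₁ = Real.cos θ₂ := by
      have : 2*s*Real.cos θ₁ = 2*s*Real.cos θ₂ := by
        simp only [hφ] at heq; linarith
      exact mul_left_cancel₀ (by positivity) this
    exact Real.injOn_cos ⟨h₁.1.le, h₁.2.le⟩ ⟨h₂.1.le, h₂.2.le⟩ hc'
  have hcov := MeasureTheory.integral_image_eq_integral_abs_deriv_smul
    measurableSet_Ioo hderiv hinj F
  rw [himg] at hcov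
  have hpt : ∀ θ ∈ Set.Ioo (0:ℝ) π,
      |(-(2*s*Real.sin θ))| • F (φ θ) = Real.log (1 + c + 2*s*Real.cos θ) := by
    intro θ ⟨hθ0, hθπ⟩
    have hsin : 0 < Real.sin θ := Real.sin_pos_of_pos_of_lt_pi hθ0 hθπ
    have habs : |(-(2*s*Real.sin θ))| = 2*s*Real.sin θ := by
      rw [abs_neg, abs_of_pos (by positivity)]
    have hsqrt : Real.sqrt (4 * c - (φ θ - 1 - c)^2) = 2*s*Real.sin θ := by
      have : 4 * c - (φ θ - 1 - c)^2 = (2*s*Real.sin θ)^2 := by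
        simp only [hφ]
        have := Real.sin_sq_add_cos_sq θ
        nlinarith
      rw [this, Real.sqrt_sq (by positivity)]
    rw [habs, smul_eq_mul, hF]
    simp only
    rw [hsqrt]
    field_simp
    rfl
  rw [MeasureTheory.setIntegral_congr_fun measurableSet_Ioo hpt] at hcov
  rw [intervalIntegral.integral_of_le hab, MeasureTheory.integral_Ioc_eq_integral_Ioo, hcov,
    ← MeasureTheory.integral_Ioc_eq_integral_Ioo,
    ← intervalIntegral.integral_of_le Real.pi_pos.le]
  exact integral_log_cos_pi hc0 hc1

theorem clt_mean_log (c : ℝ) (hc : c ∈ Set.Ioo (0:ℝ) 1) :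
    let a := (1 - Real.sqrt c)^2
    let b := (1 + Real.sqrt c)^2
    (Real.log a + Real.log b) / 4
      - (1 / (2 * Real.pi)) * ∫ x in a..b,
          Real.log x / Real.sqrt (4 * c - (x - 1 - c)^2)
      = (1 / 2) * Real.log (1 - c) := by
  obtain ⟨hc0, hc1⟩ := hc
  intro a b
  rw [integral_singular_eq_zero hc0 hc1, mul_zero, sub_zero]
  have hs0 : 0 < Real.sqrt c := Real.sqrt_pos.mpr hc0
  have hs1 : Real.sqrt c < 1 := by
    rw [show (1:ℝ) = Real.sqrt 1 by simp]
    exact Real.sqrt_lt_sqrt hc0.le hc1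
  have hsq : Real.sqrt c * Real.sqrt c = c := Real.mul_self_sqrt hc0.le
  have ha0 : a ≠ 0 := pow_ne_zero 2 (by linarith)
  have hb0 : b ≠ 0 := pow_ne_zero 2 (by positivity)
  have hab : a * b = (1 - c)^2 := by
    show (1 - Real.sqrt c)^2 * (1 + Real.sqrt c)^2 = (1-c)^2
    nlinarith
  rw [← Real.log_mul ha0 hb0, hab, Real.log_pow]
  push_cast
  ring
end

section
/- For $c \in (0,1)$, $\frac{1}{2\pi}\int_0^{2\pi} \frac{2\sin^2\theta}{1 + c - 2\sqrt{c}\cos\theta}\,\log\big(1 + c - 2\sqrt{c}\cos\theta\big)\, d\theta = \frac{c-1}{c}\log(1-c) - 1$. -/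
open Real MeasureTheory Set

noncomputable section MP

def Dd (r θ : ℝ) : ℝ := 1 + r ^ 2 - 2 * r * Real.cos θ

lemma Dd_lower {r : ℝ} (hr0 : 0 < r) (θ : ℝ) : (1 - r)^2 ≤ Dd r θ := by
  have h1 := Real.cos_le_one θ
  unfold Dd; nlinarith

lemma Dd_pos {r : ℝ} (hr0 : 0 < r) (hr1 : r < 1) (θ : ℝ) : 0 < Dd r θ := by
  have := Dd_lower hr0 θ
  nlinarith

lemma continuous_Dd {r : ℝ} : Continuous (Dd r) :=
  (continuous_const.sub ((continuous_const.mul Real.continuous_cos)))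

lemma continuous_cos_mul (c : ℝ) : Continuous (fun θ : ℝ => Real.cos (c * θ)) :=
  Real.continuous_cos.comp (continuous_const.mul continuous_id)

lemma intervalIntegrable_cos_mul (c a b : ℝ) :
    IntervalIntegrable (fun θ : ℝ => Real.cos (c * θ)) volume a b :=
  (continuous_cos_mul c).intervalIntegrable a b

lemma continuous_cos_div_Dd {r : ℝ} (hr0 : 0 < r) (hr1 : r < 1) (c : ℝ) :
    Continuous (fun θ : ℝ => Real.cos (c * θ) / Dd r θ) :=
  (continuous_cos_mul c).div continuous_Dd (fun θ => (Dd_pos hr0 hr1 θ).ne')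

/-- Z integral -/
lemma Z_integral (j : ℤ) : (∫ θ in (0:ℝ)..(2*π), Real.cos (j * θ)) = if j = 0 then 2*π else 0 := by
  rcases eq_or_ne j 0 with h | h
  · simp [h, Real.pi_pos.le]
  · simp only [h, if_false]
    have hj : (j:ℝ) ≠ 0 := Int.cast_ne_zero.mpr h
    have : (∫ θ in (0:ℝ)..(2*π), Real.cos (j * θ)) = (j:ℝ)⁻¹ • ∫ x in ((j:ℝ)*0)..((j:ℝ)*(2*π)), Real.cos x := by
      rw [intervalIntegral.integral_comp_mul_left (fun x => Real.cos x) hj]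
    rw [this]
    rw [integral_cos]
    have h2 : Real.sin ((j:ℝ) * (2*π)) = 0 := by
      have : (j:ℝ) * (2*π) = (2*j : ℤ) * π := by push_cast; ring
      rw [this, Real.sin_int_mul_pi]
    simp [h2]

lemma zdef_norm {r θ : ℝ} (hr0 : 0 ≤ r) : ‖(r:ℂ) * Complex.exp (θ * Complex.I)‖ = r := by
  rw [norm_mul, Complex.norm_exp_ofReal_mul_I, Complex.norm_real, Real.norm_of_nonneg hr0, mul_one]

lemma normSq_one_sub_z {r θ : ℝ} :
    Complex.normSq (1 - (r:ℂ) * Complex.exp (θ * Complex.I)) = Dd r θ := by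
  have hre : (1 - (r:ℂ) * Complex.exp (θ * Complex.I)).re = 1 - r * Real.cos θ := by
    simp [Complex.sub_re, Complex.mul_re, Complex.exp_ofReal_mul_I_re, Complex.exp_ofReal_mul_I_im]
  have him : (1 - (r:ℂ) * Complex.exp (θ * Complex.I)).im = -(r * Real.sin θ) := by
    simp [Complex.sub_im, Complex.mul_im, Complex.exp_ofReal_mul_I_re, Complex.exp_ofReal_mul_I_im]
  rw [Complex.normSq_apply, hre, him]
  have := Real.sin_sq_add_cos_sq θ
  unfold Dd; nlinarith

lemma zpow_re {r θ : ℝ} (n : ℕ) :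
    (((r:ℂ) * Complex.exp (θ * Complex.I)) ^ n / n).re = (r ^ n / n) * Real.cos (n * θ) := by
  have hz : ((r:ℂ) * Complex.exp (θ * Complex.I)) ^ n / n
      = ((r ^ n / n : ℝ) : ℂ) * Complex.exp ((↑(n * θ) : ℝ) * Complex.I) := by
    rw [mul_pow, ← Complex.exp_nat_mul]
    push_cast
    ring
  rw [hz, Complex.re_ofReal_mul, Complex.exp_ofReal_mul_I_re]

lemma zpow_re' {r θ : ℝ} (n : ℕ) :
    ((((r:ℂ) * Complex.exp (θ * Complex.I)) ^ n)).re = r ^ n * Real.cos (n * θ) := by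
  have hz : ((r:ℂ) * Complex.exp (θ * Complex.I)) ^ n
      = ((r ^ n : ℝ) : ℂ) * Complex.exp ((↑(n * θ) : ℝ) * Complex.I) := by
    rw [mul_pow, ← Complex.exp_nat_mul]
    push_cast
    ring
  rw [hz, Complex.re_ofReal_mul, Complex.exp_ofReal_mul_I_re]

lemma hasSum_log_Dd {r : ℝ} (hr0 : 0 < r) (hr1 : r < 1) (θ : ℝ) :
    HasSum (fun n : ℕ => (r ^ n / n) * Real.cos (n * θ)) (-(1/2) * Real.log (Dd r θ)) := by
  set z : ℂ := (r:ℂ) * Complex.exp (θ * Complex.I) with hzdef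
  have hz : ‖z‖ < 1 := by rw [zdef_norm hr0.le]; exact hr1
  have H := Complex.hasSum_re (Complex.hasSum_taylorSeries_neg_log hz)
  have h1 : ∀ n : ℕ, (z ^ n / n).re = (r ^ n / n) * Real.cos (n * θ) := fun n => zpow_re n
  have h2 : (-Complex.log (1 - z)).re = -(1/2) * Real.log (Dd r θ) := by
    rw [Complex.neg_re, Complex.log_re]
    rw [Complex.norm_def, Real.log_sqrt (Complex.normSq_nonneg _), normSq_one_sub_z]
    ring
  rw [← h2]
  exact (funext h1 : _) ▸ H

lemma hasSum_poisson {r : ℝ} (hr0 : 0 < r) (hr1 : r < 1) (θ : ℝ) :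
    HasSum (fun n : ℕ => r ^ n * Real.cos (n * θ)) ((1 - r * Real.cos θ) / Dd r θ) := by
  set z : ℂ := (r:ℂ) * Complex.exp (θ * Complex.I) with hzdef
  have hz : ‖z‖ < 1 := by rw [zdef_norm hr0.le]; exact hr1
  have H := Complex.hasSum_re (hasSum_geometric_of_norm_lt_one hz)
  have h1 : ∀ n : ℕ, (z ^ n).re = r ^ n * Real.cos (n * θ) := fun n => zpow_re' n
  have h2 : ((1 - z)⁻¹).re = (1 - r * Real.cos θ) / Dd r θ := by
    rw [Complex.inv_re, normSq_one_sub_z]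
    congr 1
    simp [hzdef, Complex.sub_re, Complex.mul_re, Complex.exp_ofReal_mul_I_re, Complex.exp_ofReal_mul_I_im]
  rw [← h2]
  exact (funext h1 : _) ▸ H

/-- Generic swap lemma on [0, 2π]. -/
lemma hasSum_intervalIntegral {F : ℕ → ℝ → ℝ} (hcont : ∀ n, Continuous (F n)) (C : ℕ → ℝ)
    (hC : ∀ n θ, |F n θ| ≤ C n) (hCs : Summable C) :
    HasSum (fun n => ∫ θ in (0:ℝ)..(2*π), F n θ) (∫ θ in (0:ℝ)..(2*π), ∑' n, F n θ) := by
  have h2π : (0:ℝ) ≤ 2*π := by positivity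
  have hint : ∀ n, IntegrableOn (F n) (Ioc 0 (2*π)) volume := fun n =>
    (hcont n).integrableOn_Ioc
  have hsum : Summable fun n => ∫ θ in Ioc (0:ℝ) (2*π), |F n θ| := by
    apply Summable.of_nonneg_of_le (fun n => integral_nonneg (fun θ => abs_nonneg _))
      (fun n => ?_) (hCs.mul_right (2*π))
    have : (∫ θ in Ioc (0:ℝ) (2*π), |F n θ|) = ∫ θ in (0:ℝ)..(2*π), |F n θ| := by
      rw [intervalIntegral.integral_of_le h2π]
    rw [this]
    have hb : ‖∫ θ in (0:ℝ)..(2*π), |F n θ|‖ ≤ C n * |2*π - 0| := by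
      apply intervalIntegral.norm_integral_le_of_norm_le_const
      intro x _
      rw [Real.norm_eq_abs, abs_abs]
      exact hC n x
    calc (∫ θ in (0:ℝ)..(2*π), |F n θ|) ≤ ‖∫ θ in (0:ℝ)..(2*π), |F n θ|‖ := le_abs_self _
    _ ≤ C n * |2*π - 0| := hb
    _ = C n * (2*π) := by rw [sub_zero, abs_of_nonneg h2π]
  have := MeasureTheory.hasSum_integral_of_summable_integral_norm (μ := volume.restrict (Ioc 0 (2*π)))
    (F := F) hint (by simpa [Real.norm_eq_abs] using hsum)
  simpa [intervalIntegral.integral_of_le h2π] using this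

lemma B_integral {r : ℝ} (hr0 : 0 < r) (hr1 : r < 1) (n : ℤ) :
    (∫ θ in (0:ℝ)..(2*π), Real.cos (n * θ) / Dd r θ)
      = 2 * π * r ^ n.natAbs / (1 - r ^ 2) := by
  have hDpos : ∀ θ, 0 < Dd r θ := Dd_pos hr0 hr1
  set F : ℕ → ℝ → ℝ := fun m θ => 2 * r ^ m * Real.cos (m * θ) * Real.cos (n * θ) with hF
  -- pointwise sum
  have hptwise : ∀ θ, HasSum (fun m => F m θ)
      (2 * (1 - r * Real.cos θ) / Dd r θ * Real.cos (n * θ)) := by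
    intro θ
    have H := ((hasSum_poisson hr0 hr1 θ).mul_left 2).mul_right (Real.cos (n * θ))
    have heq : (fun m : ℕ => 2 * (r ^ m * Real.cos (m * θ)) * Real.cos (n * θ)) = fun m => F m θ := by
      funext m; show _ = 2 * r ^ m * Real.cos (m * θ) * Real.cos (n * θ); ring
    have hval : 2 * ((1 - r * Real.cos θ) / Dd r θ) * Real.cos (n * θ)
        = 2 * (1 - r * Real.cos θ) / Dd r θ * Real.cos (n * θ) := by ring
    rw [← heq, ← hval]
    exact H
  -- swap
  have hswap := hasSum_intervalIntegral (F := F)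
    (fun m => by
      show Continuous fun θ => 2 * r ^ m * Real.cos (m * θ) * Real.cos (n * θ)
      exact ((continuous_const.mul (continuous_cos_mul m)).mul (continuous_cos_mul n)))
    (fun m => 2 * r ^ m)
    (fun m θ => by
      show |F m θ| ≤ 2 * r ^ m
      have h1 := Real.abs_cos_le_one ((m:ℝ) * θ)
      have h2 := Real.abs_cos_le_one ((n:ℝ) * θ)
      have h3 : |Real.cos ((m:ℝ) * θ)| * |Real.cos ((n:ℝ) * θ)| ≤ 1 :=
        mul_le_one₀ h1 (abs_nonneg _) h2
      have habs : |F m θ| = 2 * r ^ m * (|Real.cos ((m:ℝ) * θ)| * |Real.cos ((n:ℝ) * θ)|) := by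
        show |2 * r ^ m * Real.cos ((m:ℝ) * θ) * Real.cos ((n:ℝ) * θ)| = _
        rw [abs_mul, abs_mul, abs_of_nonneg (by positivity : (0:ℝ) ≤ 2 * r ^ m)]
        ring
      rw [habs]
      have := mul_le_of_le_one_right (by positivity : (0:ℝ) ≤ 2 * r ^ m) h3
      linarith)
    ((summable_geometric_of_lt_one hr0.le hr1).mul_left 2)
  -- per-term integrals
  set a : ℕ → ℝ := fun m => r ^ m * ((if (m:ℤ) - n = 0 then 2*π else 0) + (if (m:ℤ) + n = 0 then 2*π else 0)) with ha
  have hterm : ∀ m : ℕ, (∫ θ in (0:ℝ)..(2*π), F m θ) = a m := by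
    intro m
    have hrw : ∀ θ : ℝ, F m θ
        = r ^ m * (Real.cos ((((m:ℤ) - n : ℤ) : ℝ) * θ) + Real.cos ((((m:ℤ) + n : ℤ) : ℝ) * θ)) := by
      intro θ
      show 2 * r ^ m * Real.cos ((m:ℝ) * θ) * Real.cos ((n:ℝ) * θ) = _
      have h2 := Real.two_mul_cos_mul_cos ((m:ℝ) * θ) ((n:ℝ) * θ)
      push_cast
      rw [sub_mul, add_mul]
      linear_combination r ^ m * h2
    rw [intervalIntegral.integral_congr (fun θ _ => hrw θ)]
    rw [intervalIntegral.integral_const_mul]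
    rw [intervalIntegral.integral_add (intervalIntegrable_cos_mul _ _ _) (intervalIntegrable_cos_mul _ _ _)]
    rw [Z_integral, Z_integral]
  -- sum of a
  have hA : HasSum a (2 * π * r ^ n.natAbs + (if n = 0 then 2*π else 0)) := by
    have heq : a = fun m => if m = n.natAbs then (2 * π * r ^ n.natAbs + (if n = 0 then 2*π else 0)) else 0 := by
      funext m
      rw [ha]
      by_cases hm : m = n.natAbs
      · subst hm
        rcases lt_trichotomy n 0 with hn | hn | hn
        · have h1 : ¬ ((n.natAbs : ℤ) - n = 0) := by omega
          have h2 : (n.natAbs : ℤ) + n = 0 := by omega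
          simp only [h1, h2, if_false, if_true, hn.ne, if_false]
          ring
        · simp [hn]
        · have h1 : (n.natAbs : ℤ) - n = 0 := by omega
          have h2 : ¬ ((n.natAbs : ℤ) + n = 0) := by omega
          simp only [h1, h2, if_true, if_false, hn.ne', if_false]
          ring
      · have h1 : ¬ ((m:ℤ) - n = 0) := by omega
        have h2 : ¬ ((m:ℤ) + n = 0) := by omega
        simp only [h1, h2, if_false, hm, add_zero, mul_zero]
    rw [heq]
    exact hasSum_ite_eq _ _
  -- combine
  have hswap' : HasSum a (∫ θ in (0:ℝ)..(2*π), ∑' m, F m θ) := (funext hterm : _) ▸ hswap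
  have hval : 2 * π * r ^ n.natAbs + (if n = 0 then 2*π else 0)
      = ∫ θ in (0:ℝ)..(2*π), ∑' m, F m θ := hA.unique hswap'
  have hsplit : ∀ θ : ℝ, (∑' m, F m θ)
      = (1 - r^2) * (Real.cos (n * θ) / Dd r θ) + Real.cos (n * θ) := by
    intro θ
    rw [(hptwise θ).tsum_eq]
    have hD := (hDpos θ).ne'
    field_simp
    unfold Dd
    ring
  rw [intervalIntegral.integral_congr (fun θ _ => hsplit θ)] at hval
  rw [intervalIntegral.integral_add
      (by exact (continuous_const.mul (continuous_cos_div_Dd hr0 hr1 (n:ℝ))).intervalIntegrable _ _ :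
        IntervalIntegrable (fun x => (1 - r ^ 2) * (Real.cos (n * x) / Dd r x)) volume 0 (2*π))
      (intervalIntegrable_cos_mul _ _ _)] at hval
  rw [intervalIntegral.integral_const_mul, Z_integral] at hval
  have h1r : (1 : ℝ) - r^2 ≠ 0 := by nlinarith
  have := hval
  field_simp
  linarith [this]

lemma M_integral {r : ℝ} (hr0 : 0 < r) (hr1 : r < 1) (n : ℕ) :
    (∫ θ in (0:ℝ)..(2*π), 2 * Real.sin θ ^ 2 * Real.cos (n * θ) / Dd r θ)
      = 2 * π / (1 - r ^ 2) * (r ^ n - (r ^ (n + 2) + r ^ (((n:ℤ) - 2).natAbs)) / 2) := by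
  have hD : ∀ θ, 0 < Dd r θ := Dd_pos hr0 hr1
  have hkey : ∀ θ : ℝ, 2 * Real.sin θ ^ 2 * Real.cos (n * θ) / Dd r θ
      = Real.cos (((n:ℤ) : ℝ) * θ) / Dd r θ
        - (1/2) * (Real.cos ((((n:ℤ) + 2 : ℤ) : ℝ) * θ) / Dd r θ)
        - (1/2) * (Real.cos ((((n:ℤ) - 2 : ℤ) : ℝ) * θ) / Dd r θ) := by
    intro θ
    have hs := Real.sin_sq_eq_half_sub θ
    have hc := Real.two_mul_cos_mul_cos ((n:ℝ) * θ) (2 * θ)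
    have e0 : ((n:ℤ) : ℝ) * θ = (n:ℝ) * θ := by push_cast; ring
    have e1 : (((n:ℤ) + 2 : ℤ) : ℝ) * θ = (n:ℝ) * θ + 2 * θ := by push_cast; ring
    have e2 : (((n:ℤ) - 2 : ℤ) : ℝ) * θ = (n:ℝ) * θ - 2 * θ := by push_cast; ring
    rw [e0, e1, e2]
    have hnum : 2 * Real.sin θ ^ 2 * Real.cos ((n:ℝ) * θ)
        = Real.cos ((n:ℝ) * θ) - (1/2) * Real.cos ((n:ℝ) * θ + 2 * θ)
          - (1/2) * Real.cos ((n:ℝ) * θ - 2 * θ) := by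
      linear_combination (2 * Real.cos ((n:ℝ) * θ)) * hs - hc / 2
    rw [hnum]
    ring
  -- now integrate
  rw [intervalIntegral.integral_congr (fun θ _ => hkey θ)]
  rw [intervalIntegral.integral_sub
      (by exact (((continuous_cos_div_Dd hr0 hr1 _).intervalIntegrable _ _).sub
        ((continuous_const.mul (continuous_cos_div_Dd hr0 hr1 _)).intervalIntegrable _ _)) :
        IntervalIntegrable (fun x => Real.cos (((n:ℤ):ℝ) * x) / Dd r x
          - (1/2) * (Real.cos ((((n:ℤ) + 2 : ℤ) : ℝ) * x) / Dd r x)) volume 0 (2*π))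
      (by exact (continuous_const.mul (continuous_cos_div_Dd hr0 hr1 _)).intervalIntegrable _ _ :
        IntervalIntegrable (fun x => (1/2) * (Real.cos ((((n:ℤ) - 2 : ℤ) : ℝ) * x) / Dd r x))
          volume 0 (2*π)),
    intervalIntegral.integral_sub
      (by exact (continuous_cos_div_Dd hr0 hr1 _).intervalIntegrable _ _ :
        IntervalIntegrable (fun x => Real.cos (((n:ℤ):ℝ) * x) / Dd r x) volume 0 (2*π))
      (by exact (continuous_const.mul (continuous_cos_div_Dd hr0 hr1 _)).intervalIntegrable _ _ :
        IntervalIntegrable (fun x => (1/2) * (Real.cos ((((n:ℤ) + 2 : ℤ) : ℝ) * x) / Dd r x))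
          volume 0 (2*π)),
    intervalIntegral.integral_const_mul, intervalIntegral.integral_const_mul]
  rw [B_integral hr0 hr1 ((n:ℤ)), B_integral hr0 hr1 ((n:ℤ) + 2), B_integral hr0 hr1 ((n:ℤ) - 2)]
  have h1 : ((n:ℤ)).natAbs = n := by omega
  have h2 : ((n:ℤ) + 2).natAbs = n + 2 := by omega
  rw [h1, h2]
  ring


lemma main_int {r : ℝ} (hr0 : 0 < r) (hr1 : r < 1) :
    (∫ θ in (0:ℝ)..(2*π), (2 * Real.sin θ ^ 2 / Dd r θ) * Real.log (Dd r θ))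
      = 2 * π * (1 - r ^ 2) / r ^ 2 * (-Real.log (1 - r ^ 2)) - 2 * π := by
  have hD : ∀ θ, 0 < Dd r θ := Dd_pos hr0 hr1
  have hK : (0:ℝ) < (1 - r)^2 := pow_pos (by linarith) 2
  have h1r : (1:ℝ) - r ^ 2 ≠ 0 := by nlinarith
  have hrne : r ≠ 0 := hr0.ne'
  set G : ℕ → ℝ → ℝ :=
    fun n θ => (-2) * (2 * Real.sin θ ^ 2 / Dd r θ) * ((r ^ n / n) * Real.cos (n * θ)) with hG
  -- pointwise sum
  have hptwise : ∀ θ : ℝ, HasSum (fun n => G n θ)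
      ((2 * Real.sin θ ^ 2 / Dd r θ) * Real.log (Dd r θ)) := by
    intro θ
    have H := (hasSum_log_Dd hr0 hr1 θ).mul_left ((-2) * (2 * Real.sin θ ^ 2 / Dd r θ))
    have : ((-2) * (2 * Real.sin θ ^ 2 / Dd r θ)) * (-(1/2) * Real.log (Dd r θ))
        = (2 * Real.sin θ ^ 2 / Dd r θ) * Real.log (Dd r θ) := by ring
    rw [this] at H
    exact H
  -- bounds
  have hgb : ∀ θ : ℝ, |2 * Real.sin θ ^ 2 / Dd r θ| ≤ 2 / (1 - r)^2 := by
    intro θ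
    rw [abs_div, abs_of_nonneg (by positivity : (0:ℝ) ≤ 2 * Real.sin θ ^ 2),
      abs_of_pos (hD θ)]
    apply div_le_div₀ (by positivity) (by nlinarith [Real.sin_sq_le_one θ]) hK (Dd_lower hr0 θ)
  have hcb : ∀ (n : ℕ) (θ : ℝ), |(r ^ n / n) * Real.cos (n * θ)| ≤ r ^ n := by
    intro n θ
    rw [abs_mul]
    have h1 : |r ^ n / (n:ℝ)| ≤ r ^ n := by
      rw [abs_of_nonneg (by positivity)]
      cases n with
      | zero => simp
      | succ m => exact div_le_self (by positivity) (by exact_mod_cast Nat.one_le_iff_ne_zero.mpr (Nat.succ_ne_zero m))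
    have h2 := Real.abs_cos_le_one ((n:ℝ) * θ)
    calc |r ^ n / (n:ℝ)| * |Real.cos ((n:ℝ) * θ)| ≤ r ^ n * 1 := by
          apply mul_le_mul h1 h2 (abs_nonneg _) (by positivity)
      _ = r ^ n := mul_one _
  -- swap
  have hswap := hasSum_intervalIntegral (F := G)
    (fun n => by
      show Continuous fun θ => (-2) * (2 * Real.sin θ ^ 2 / Dd r θ) * ((r ^ n / n) * Real.cos (n * θ))
      exact ((continuous_const.mul ((continuous_const.mul (Real.continuous_sin.pow 2)).div
        continuous_Dd (fun θ => (hD θ).ne'))).mul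
        (continuous_const.mul (continuous_cos_mul n))))
    (fun n => (2 * (2 / (1 - r)^2)) * r ^ n)
    (fun n θ => by
      show |(-2) * (2 * Real.sin θ ^ 2 / Dd r θ) * ((r ^ n / n) * Real.cos (n * θ))| ≤ _
      rw [abs_mul, abs_mul, abs_neg, abs_two]
      calc 2 * |2 * Real.sin θ ^ 2 / Dd r θ| * |(r ^ n / n) * Real.cos (n * θ)|
          ≤ 2 * (2 / (1 - r)^2) * r ^ n := by
            apply mul_le_mul (by linarith [hgb θ]) (hcb n θ) (abs_nonneg _) (by positivity)
        _ = (2 * (2 / (1 - r)^2)) * r ^ n := by ring)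
    ((summable_geometric_of_lt_one hr0.le hr1).mul_left _)
  -- per-term values
  set a : ℕ → ℝ := fun n => (-2 * (r ^ n / n)) *
      (2 * π / (1 - r ^ 2) * (r ^ n - (r ^ (n + 2) + r ^ (((n:ℤ) - 2).natAbs)) / 2)) with ha
  have hterm : ∀ n : ℕ, (∫ θ in (0:ℝ)..(2*π), G n θ) = a n := by
    intro n
    have hrw : ∀ θ : ℝ, G n θ = (-2 * (r ^ n / n)) * (2 * Real.sin θ ^ 2 * Real.cos (n * θ) / Dd r θ) := by
      intro θ
      show (-2) * (2 * Real.sin θ ^ 2 / Dd r θ) * ((r ^ n / n) * Real.cos (n * θ)) = _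
      ring
    rw [intervalIntegral.integral_congr (fun θ _ => hrw θ), intervalIntegral.integral_const_mul,
      M_integral hr0 hr1 n]
  -- the sum of a
  set b : ℕ → ℝ := fun n => (2 * π * (1 - r ^ 2) / r ^ 2) * ((r ^ 2) ^ n / n) with hb
  have heq : ∀ n : ℕ, a n = b n + (if n = 1 then -(2*π) else 0) := by
    intro n
    match n with
    | 0 => simp [ha, hb]
    | 1 =>
      have h3 : (((1:ℕ):ℤ) - 2).natAbs = 1 := by norm_num
      rw [ha, hb]
      simp only [h3, if_true]
      norm_num
      field_simp
      ring
    | (m+2) =>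
      have h3 : (((m+2:ℕ):ℤ) - 2).natAbs = m := by omega
      rw [ha, hb]
      simp only [h3]
      rw [if_neg (by omega)]
      have hm2 : ((m:ℝ) + 2) ≠ 0 := by positivity
      push_cast
      field_simp
      ring
  have hx : |r ^ 2| < 1 := by rw [abs_of_pos (by positivity)]; nlinarith
  have hlog0 : HasSum (fun n : ℕ => (r^2) ^ (n+1) / (n+1)) (-Real.log (1 - r^2)) :=
    hasSum_pow_div_log_of_abs_lt_one hx
  have hlog : HasSum (fun n : ℕ => (r^2) ^ n / n) (-Real.log (1 - r^2)) := by
    have h2 : HasSum (fun n : ℕ => (r^2) ^ (n+1) / ((n:ℝ)+1)) (-Real.log (1 - r^2)) := hlog0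
    have h3 := (hasSum_nat_add_iff (f := fun n : ℕ => (r^2) ^ n / (n:ℝ)) (g := -Real.log (1 - r^2)) 1).mp (by
        convert h2 using 2 with n
        · rfl
        · push_cast
          ring_nf)
    simpa using h3
  have hbsum : HasSum b ((2 * π * (1 - r ^ 2) / r ^ 2) * (-Real.log (1 - r^2))) :=
    hlog.mul_left _
  have hasum : HasSum a ((2 * π * (1 - r ^ 2) / r ^ 2) * (-Real.log (1 - r^2)) + -(2*π)) := by
    have hdelta : HasSum (fun n : ℕ => if n = 1 then -(2*π) else 0) (-(2*π)) := hasSum_ite_eq 1 _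
    have := hbsum.add hdelta
    exact (funext heq : _) ▸ this
  -- combine
  have hswap' : HasSum a (∫ θ in (0:ℝ)..(2*π), ∑' n, G n θ) := (funext hterm : _) ▸ hswap
  have hfin := hasum.unique hswap'
  have hint_eq : (∫ θ in (0:ℝ)..(2*π), ∑' n, G n θ)
      = ∫ θ in (0:ℝ)..(2*π), (2 * Real.sin θ ^ 2 / Dd r θ) * Real.log (Dd r θ) :=
    intervalIntegral.integral_congr (fun θ _ => (hptwise θ).tsum_eq)
  rw [hint_eq] at hfin
  rw [← hfin]
  ring


end MP

theorem mp_log_trig_integral (c : ℝ) (hc : c ∈ Set.Ioo (0:ℝ) 1) :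
    (1 / (2 * Real.pi)) * ∫ θ in (0:ℝ)..(2 * Real.pi),
        (2 * Real.sin θ ^ 2 / (1 + c - 2 * Real.sqrt c * Real.cos θ))
          * Real.log (1 + c - 2 * Real.sqrt c * Real.cos θ)
      = (c - 1) / c * Real.log (1 - c) - 1 := by
  obtain ⟨hc0, hc1⟩ := hc
  set r : ℝ := Real.sqrt c with hrdef
  have hr0 : 0 < r := Real.sqrt_pos.mpr hc0
  have hc2 : r ^ 2 = c := Real.sq_sqrt hc0.le
  have hr1 : r < 1 := by nlinarith
  have hmain := main_int hr0 hr1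
  have hfun : ∀ θ : ℝ, (2 * Real.sin θ ^ 2 / (1 + c - 2 * Real.sqrt c * Real.cos θ))
      * Real.log (1 + c - 2 * Real.sqrt c * Real.cos θ)
      = (2 * Real.sin θ ^ 2 / Dd r θ) * Real.log (Dd r θ) := by
    intro θ
    unfold Dd
    rw [hc2]
  rw [intervalIntegral.integral_congr (fun θ _ => hfun θ), hmain, hc2]
  have hπ : (π : ℝ) ≠ 0 := Real.pi_ne_zero
  have hcne : c ≠ 0 := hc0.ne'
  field_simp
  ring
end

section
/- For $c \in (0,1)$ and any fixed $z_2$ on the circle $|\xi_2| = 1$ with $r > 1$, the contour integral $\frac{1}{2}\oint_{|\xi_1|=1} \log\big((1+\sqrt{c}\,\xi_1)^2\big)\Big(\frac{1}{(\xi_1 - r\xi_2)^2} + \frac{1}{(1 - r\xi_1\xi_2)^2}\Big) d\xi_1 = \frac{2 i \pi \sqrt{c}}{r\xi_2 (r\xi_2 + \sqrt{c})}$. -/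
open Complex Metric

set_option maxHeartbeats 1000000 in
theorem contour_log_integral (c : ℝ) (hc : c ∈ Set.Ioo (0:ℝ) 1)
    (r : ℝ) (hr : 1 < r) (ξ2 : ℂ) (hξ2 : ‖ξ2‖ = 1) :
    (1 / 2 : ℂ) *
        (∮ ξ in C(0, 1),
          Complex.log ((1 + (Real.sqrt c : ℂ) * ξ) ^ 2) *
            (1 / (ξ - (r : ℂ) * ξ2) ^ 2 + 1 / (1 - (r : ℂ) * ξ * ξ2) ^ 2))
      = 2 * Complex.I * Real.pi * (Real.sqrt c : ℂ) /
          ((r : ℂ) * ξ2 * ((r : ℂ) * ξ2 + (Real.sqrt c : ℂ))) := by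
  obtain ⟨hc0, hc1⟩ := hc
  simp only [show ∀ ξ : ℂ, (1 : ℂ) - (r : ℂ) * ξ * ξ2 = 1 - ((r : ℂ) * ξ2) * ξ from fun ξ => by ring]
  have hr0 : (0:ℝ) < r := lt_trans one_pos hr
  set s : ℂ := (Real.sqrt c : ℂ) with hs_def
  have hs0 : (0:ℝ) < Real.sqrt c := Real.sqrt_pos.2 hc0
  have hs1 : Real.sqrt c < 1 := by
    nlinarith [Real.sq_sqrt hc0.le, Real.sqrt_nonneg c]
  set w : ℂ := (r:ℂ) * ξ2 with hw_def
  have habs_w : ‖w‖ = r := by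
    rw [hw_def, norm_mul, hξ2, mul_one, Complex.norm_real, Real.norm_eq_abs, abs_of_pos hr0]
  have hw0 : w ≠ 0 := by
    intro h; rw [h, norm_zero] at habs_w; linarith
  set a : ℂ := w⁻¹ with ha_def
  have habs_a : ‖a‖ = r⁻¹ := by rw [ha_def, norm_inv, habs_w]
  have ha0 : a ≠ 0 := inv_ne_zero hw0
  have hwa : w * a = 1 := mul_inv_cancel₀ hw0
  clear_value s w
  -- basic facts on the closed unit ball
  have hslit : ∀ z : ℂ, ‖z‖ ≤ 1 → 1 + s * z ∈ slitPlane := by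
    intro z hz
    refine Complex.mem_slitPlane_iff.2 (Or.inl ?_)
    have hre : (1 + s * z).re = 1 + Real.sqrt c * z.re := by
      simp [hs_def, Complex.add_re, Complex.mul_re]
    rw [hre]
    have h1 := Complex.abs_re_le_norm z
    have h2 : |z.re| ≤ 1 := h1.trans hz
    have h3 := abs_le.1 h2
    nlinarith
  have hne1 : ∀ z : ℂ, ‖z‖ ≤ 1 → (1 : ℂ) + s * z ≠ 0 := fun z hz =>
    Complex.slitPlane_ne_zero (hslit z hz)
  have hnew : ∀ z : ℂ, ‖z‖ ≤ 1 → z - w ≠ 0 := by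
    intro z hz h
    have : z = w := sub_eq_zero.1 h
    rw [this] at hz; rw [habs_w] at hz; linarith
  -- the two pieces
  set f2 : ℂ → ℂ := fun z => 2 * a ^ 2 * Complex.log (1 + s * z) with hf2_def
  set g1 : ℂ → ℂ := fun z => 2 * Complex.log (1 + s * z) * ((z - w) ^ 2)⁻¹ with hg1_def
  set g2 : ℂ → ℂ := fun z => ((z - a) ^ 2)⁻¹ • f2 z with hg2_def
  -- Step A : the integrand equals g1 + g2 on the unit sphere
  have hcongr :
      (∮ ξ in C(0, 1),
          Complex.log ((1 + s * ξ) ^ 2) *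
            (1 / (ξ - w) ^ 2 + 1 / (1 - w * ξ) ^ 2))
        = ∮ ξ in C(0, 1), (g1 ξ + g2 ξ) := by
    refine circleIntegral.integral_congr zero_le_one ?_
    intro ξ hξ
    have hξ1 : ‖ξ‖ = 1 := by
      simpa using (mem_sphere_zero_iff_norm.1 hξ)
    have hsl := hslit ξ hξ1.le
    have hne := hne1 ξ hξ1.le
    have hzw := hnew ξ hξ1.le
    have hza : ξ - a ≠ 0 := by
      intro h
      have : ξ = a := sub_eq_zero.1 h
      rw [this, habs_a] at hξ1
      have : r = 1 := by
        field_simp at hξ1; linarith [hξ1]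
      linarith
    have h1wz : (1 : ℂ) - w * ξ ≠ 0 := by
      intro h
      have h2 : w * ξ = 1 := by linear_combination -h
      have := congrArg (‖·‖) h2
      rw [norm_mul, habs_w, hξ1, mul_one, norm_one] at this
      linarith
    -- log of the square
    have harg : |Complex.arg (1 + s * ξ)| < Real.pi / 2 := by
      refine Complex.abs_arg_lt_pi_div_two_iff.2 (Or.inl ?_)
      have hre : (1 + s * ξ).re = 1 + Real.sqrt c * ξ.re := by
        simp [hs_def, Complex.add_re, Complex.mul_re]
      rw [hre]
      have h1 := Complex.abs_re_le_norm ξ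
      have h2 : |ξ.re| ≤ 1 := by rw [hξ1] at h1; exact h1
      have h3 := abs_le.1 h2
      nlinarith
    have hlogsq : Complex.log ((1 + s * ξ) ^ 2) = 2 * Complex.log (1 + s * ξ) := by
      rw [sq, Complex.log_mul hne hne ?_, two_mul]
      constructor
      · have := (abs_lt.1 harg).1
        have hπ := Real.pi_pos
        linarith
      · have := (abs_lt.1 harg).2
        linarith
    show Complex.log ((1 + s * ξ) ^ 2) * (1 / (ξ - w) ^ 2 + 1 / (1 - w * ξ) ^ 2)
        = g1 ξ + g2 ξ
    rw [hlogsq, hg1_def, hg2_def, hf2_def]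
    simp only [smul_eq_mul]
    have key : (1 : ℂ) / (1 - w * ξ) ^ 2 = a ^ 2 / (ξ - a) ^ 2 := by
      rw [div_eq_div_iff (pow_ne_zero _ h1wz) (pow_ne_zero _ hza)]
      linear_combination (2 * a * ξ - ξ ^ 2 * (1 + w * a)) * hwa
    rw [key]
    field_simp
  -- Step B : integral of g1 vanishes (analytic on the closed disk)
  have hd1 : ∀ z ∈ closedBall (0:ℂ) 1, DifferentiableAt ℂ g1 z := by
    intro z hz
    have hz1 : ‖z‖ ≤ 1 := by
      simpa using (mem_closedBall_zero_iff.1 hz)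
    have hlin : DifferentiableAt ℂ (fun ξ : ℂ => 1 + s * ξ) z :=
      (differentiableAt_id.const_mul s).const_add 1
    have hlog : DifferentiableAt ℂ (fun ξ : ℂ => Complex.log (1 + s * ξ)) z :=
      hlin.clog (hslit z hz1)
    have hinv : DifferentiableAt ℂ (fun ξ : ℂ => ((ξ - w) ^ 2)⁻¹) z := by
      refine DifferentiableAt.inv ?_ (pow_ne_zero 2 (hnew z hz1))
      exact (differentiableAt_id.sub_const w).pow 2
    exact (hlog.const_mul 2).mul hinv
  have hint1 : (∮ ξ in C(0, 1), g1 ξ) = 0 := by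
    refine circleIntegral_eq_zero_of_differentiable_on_off_countable zero_le_one
      Set.countable_empty (fun z hz => (hd1 z hz).continuousAt.continuousWithinAt) ?_
    exact fun z hz => hd1 z (ball_subset_closedBall hz.1)
  -- Step C : integral of g2 via the Cauchy derivative formula
  have ha_ball : a ∈ ball (0:ℂ) 1 := by
    rw [mem_ball_zero_iff, habs_a]
    rw [inv_lt_one_iff₀]; right; exact hr
  have hU : IsOpen {z : ℂ | 1 + s * z ∈ slitPlane} :=
    Complex.isOpen_slitPlane.preimage (continuous_const.add (continuous_const.mul continuous_id))
  have hsub : closedBall (0:ℂ) 1 ⊆ {z : ℂ | 1 + s * z ∈ slitPlane} := by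
    intro z hz
    exact hslit z (by simpa using (mem_closedBall_zero_iff.1 hz))
  have hf2diff : DifferentiableOn ℂ f2 {z : ℂ | 1 + s * z ∈ slitPlane} := by
    intro z hz
    have hlin : DifferentiableAt ℂ (fun ξ : ℂ => 1 + s * ξ) z :=
      (differentiableAt_id.const_mul s).const_add 1
    exact ((hlin.clog hz).const_mul (2 * a ^ 2)).differentiableWithinAt
  have hC := two_pi_I_inv_smul_circleIntegral_sub_sq_inv_smul_of_differentiable hU hsub
    hf2diff ha_ball
  have habs_sa : ‖s * a‖ < 1 := by
    rw [norm_mul, habs_a]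
    have : ‖s‖ = Real.sqrt c := by
      rw [hs_def, Complex.norm_real, Real.norm_eq_abs, abs_of_pos hs0]
    rw [this]
    have h1 : (0:ℝ) < r⁻¹ := by positivity
    have h2 : r⁻¹ < 1 := by rw [inv_lt_one_iff₀]; right; exact hr
    nlinarith
  have hne_sa : (1 : ℂ) + s * a ≠ 0 := by
    intro h
    have h2 : s * a = -1 := by linear_combination h
    have := congrArg (‖·‖) h2
    rw [norm_neg, norm_one] at this
    rw [this] at habs_sa; linarith
  have hderiv : deriv f2 a = 2 * a ^ 2 * (s / (1 + s * a)) := by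
    have hlin : HasDerivAt (fun ξ : ℂ => 1 + s * ξ) s a := by
      simpa using ((hasDerivAt_id a).const_mul s).const_add 1
    have hlog : HasDerivAt (fun ξ : ℂ => Complex.log (1 + s * ξ)) (s / (1 + s * a)) a :=
      hlin.clog (hslit a (le_of_lt (by rw [habs_a, inv_lt_one_iff₀]; right; exact hr)))
    have : HasDerivAt f2 (2 * a ^ 2 * (s / (1 + s * a))) a := hlog.const_mul (2 * a ^ 2)
    exact this.deriv
  have h2piI : (2 * (Real.pi : ℂ) * Complex.I) ≠ 0 := by
    simp [Real.pi_ne_zero, Complex.I_ne_zero]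
  have hint2 : (∮ ξ in C(0, 1), g2 ξ)
      = (2 * (Real.pi : ℂ) * Complex.I) * (2 * a ^ 2 * (s / (1 + s * a))) := by
    rw [hderiv] at hC
    have := (inv_smul_eq_iff₀ h2piI).1 hC
    simpa [smul_eq_mul, hg2_def] using this
  -- Step D : split the integral
  have hcont12 : ContinuousOn (fun z => g1 z + g2 z) (sphere (0:ℂ) 1) := by
    intro z hz
    have hz1 : ‖z‖ ≤ 1 := by
      exact le_of_eq (by simpa using (mem_sphere_zero_iff_norm.1 hz))
    have hza : z - a ≠ 0 := by
      intro h
      have : z = a := sub_eq_zero.1 h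
      have hz1' : ‖z‖ = 1 := by
        simpa using (mem_sphere_zero_iff_norm.1 hz)
      rw [this, habs_a] at hz1'
      have : r = 1 := by field_simp at hz1'; linarith [hz1']
      linarith
    have h1 : DifferentiableAt ℂ g1 z := hd1 z (by
      simpa [mem_closedBall_zero_iff] using hz1)
    have h2 : DifferentiableAt ℂ g2 z := by
      have hlin : DifferentiableAt ℂ (fun ξ : ℂ => 1 + s * ξ) z :=
        (differentiableAt_id.const_mul s).const_add 1
      have hlog : DifferentiableAt ℂ (fun ξ : ℂ => Complex.log (1 + s * ξ)) z :=
        hlin.clog (hslit z hz1)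
      have hinv : DifferentiableAt ℂ (fun ξ : ℂ => ((ξ - a) ^ 2)⁻¹) z := by
        refine DifferentiableAt.inv ?_ (pow_ne_zero 2 hza)
        exact (differentiableAt_id.sub_const a).pow 2
      have : DifferentiableAt ℂ (fun ξ : ℂ => ((ξ - a) ^ 2)⁻¹ * (2 * a ^ 2 * Complex.log (1 + s * ξ))) z :=
        hinv.mul (hlog.const_mul (2 * a ^ 2))
      simpa [hg2_def, hf2_def, smul_eq_mul] using this
    exact (h1.add h2).continuousAt.continuousWithinAt
  have hcont1 : ContinuousOn g1 (sphere (0:ℂ) 1) := by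
    intro z hz
    have hz1 : ‖z‖ ≤ 1 := by
      exact le_of_eq (by simpa using (mem_sphere_zero_iff_norm.1 hz))
    exact (hd1 z (by simpa [mem_closedBall_zero_iff] using hz1)).continuousAt.continuousWithinAt
  have hsplit : (∮ ξ in C(0, 1), (g1 ξ + g2 ξ))
      = (∮ ξ in C(0, 1), g1 ξ) + (∮ ξ in C(0, 1), g2 ξ) := by
    have hi12 : CircleIntegrable (fun z => g1 z + g2 z) 0 1 :=
      hcont12.circleIntegrable zero_le_one
    have hi1 : CircleIntegrable g1 0 1 := hcont1.circleIntegrable zero_le_one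
    have hsub' := circleIntegral.integral_sub hi12 hi1
    have heq : (fun z => (g1 z + g2 z) - g1 z) = g2 := by funext z; ring
    rw [heq] at hsub'
    linear_combination -hsub'
  -- Put everything together
  rw [hcongr, hsplit, hint1, hint2]
  have hws : w + s ≠ 0 := by
    intro h
    have h2 : w = -s := by linear_combination h
    have := congrArg (‖·‖) h2
    rw [habs_w, norm_neg] at this
    have : r = Real.sqrt c := by
      rw [this]; rw [hs_def, Complex.norm_real, Real.norm_eq_abs, abs_of_pos hs0]
    linarith
  have hne_sa' : (1 : ℂ) + s * w⁻¹ ≠ 0 := by rw [ha_def] at hne_sa; exact hne_sa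
  rw [ha_def]
  field_simp
  ring
end
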